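/- arXiv:1212.0496 — 5 statements merged into one kernel-verified Lean document; each statement's English description precedes it below -/
import Mathlib

section
/- Given a Grothendieck fibration p : E → B of categories and a comonad (Q, δ, ε) on B, there exists a comonad (K, d, e) on E lifting Q, i.e., such that p ∘ K = Q ∘ p, p(e_A) = ε_{p A} and p(d_A) = δ_{p A} for all objects A of E. -/
/-!
Statement 2: A comonad `(Q, δ, ε)` on the base of a fibration `p : E ⥤ B` (presented by a
cleavage) lifts to a comonad `(K, d, e)` on the total category, with `p (K A) = Q (p A)`,
`p (e_A) = ε_{p A}` and `p (d_A) = δ_{p A}` (modulo the canonical identifications).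
-/

namespace GrayPaper

open CategoryTheory

universe v u v' u'

variable {𝔼 : Type u} [Category.{v} 𝔼] {𝔹 : Type u'} [Category.{v'} 𝔹]

/-- A morphism `f : X ⟶ Y` in `𝔼` is `p`-Cartesian. -/
def PCart (p : 𝔼 ⥤ 𝔹) {X Y : 𝔼} (f : X ⟶ Y) : Prop :=
  ∀ {Z : 𝔼} (k : Z ⟶ Y) (u : p.obj Z ⟶ p.obj X),
    u ≫ p.map f = p.map k → ∃! l : Z ⟶ X, p.map l = u ∧ l ≫ f = k

/-- A cleavage for `p`: a choice of Cartesian lift for every morphism of `𝔹` into the image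
of an object of `𝔼`.  This presents `p` as a (cloven) Grothendieck fibration. -/
structure Cleavage (p : 𝔼 ⥤ 𝔹) where
  dom : ∀ (A : 𝔼) {X : 𝔹}, (X ⟶ p.obj A) → 𝔼
  domEq : ∀ (A : 𝔼) {X : 𝔹} (u : X ⟶ p.obj A), p.obj (dom A u) = X
  homOf : ∀ (A : 𝔼) {X : 𝔹} (u : X ⟶ p.obj A), dom A u ⟶ A
  hom_over : ∀ (A : 𝔼) {X : 𝔹} (u : X ⟶ p.obj A),
    p.map (homOf A u) = eqToHom (domEq A u) ≫ u
  cart : ∀ (A : 𝔼) {X : 𝔹} (u : X ⟶ p.obj A), PCart p (homOf A u)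

section Aux

lemma PCart.uniq {p : 𝔼 ⥤ 𝔹} {X Y Z : 𝔼} {f : X ⟶ Y} (hf : PCart p f)
    {l₁ l₂ : Z ⟶ X} (h1 : p.map l₁ = p.map l₂) (h2 : l₁ ≫ f = l₂ ≫ f) : l₁ = l₂ := by
  obtain ⟨l, -, hu⟩ := hf (l₂ ≫ f) (p.map l₂) (by simp)
  exact (hu l₁ ⟨h1, h2⟩).trans (hu l₂ ⟨rfl, rfl⟩).symm

variable (p : 𝔼 ⥤ 𝔹) (c : Cleavage p) (Q : Comonad 𝔹)

/-- The object part of the lifted comonad. -/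
abbrev Kobj (A : 𝔼) : 𝔼 := c.dom A (Q.ε.app (p.obj A))

lemma pK (A : 𝔼) : p.obj (Kobj p c Q A) = Q.obj (p.obj A) := c.domEq A _

/-- The counit of the lifted comonad. -/
abbrev eA (A : 𝔼) : Kobj p c Q A ⟶ A := c.homOf A (Q.ε.app (p.obj A))

lemma pe (A : 𝔼) : p.map (eA p c Q A) = eqToHom (pK p c Q A) ≫ Q.ε.app (p.obj A) :=
  c.hom_over A _

/-- The Cartesian filler through `eA`. -/
noncomputable def lift {Z A : 𝔼} (k : Z ⟶ A) (u : p.obj Z ⟶ Q.obj (p.obj A))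
    (hu : u ≫ Q.ε.app (p.obj A) = p.map k) : Z ⟶ Kobj p c Q A :=
  (c.cart A (Q.ε.app (p.obj A)) k (u ≫ eqToHom (pK p c Q A).symm)
    (by rw [c.hom_over]; simpa using hu)).choose

lemma lift_spec {Z A : 𝔼} (k : Z ⟶ A) (u : p.obj Z ⟶ Q.obj (p.obj A))
    (hu : u ≫ Q.ε.app (p.obj A) = p.map k) :
    p.map (lift p c Q k u hu) = u ≫ eqToHom (pK p c Q A).symm ∧
      lift p c Q k u hu ≫ eA p c Q A = k :=
  (c.cart A (Q.ε.app (p.obj A)) k (u ≫ eqToHom (pK p c Q A).symm)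
    (by rw [c.hom_over]; simpa using hu)).choose_spec.1

lemma p_lift {Z A : 𝔼} (k : Z ⟶ A) (u : p.obj Z ⟶ Q.obj (p.obj A)) (hu) :
    p.map (lift p c Q k u hu) = u ≫ eqToHom (pK p c Q A).symm :=
  (lift_spec p c Q k u hu).1

lemma lift_e {Z A : 𝔼} (k : Z ⟶ A) (u : p.obj Z ⟶ Q.obj (p.obj A)) (hu) :
    lift p c Q k u hu ≫ eA p c Q A = k :=
  (lift_spec p c Q k u hu).2

/-- The morphism part of the lifted comonad. -/
noncomputable def Kmap {A B : 𝔼} (f : A ⟶ B) : Kobj p c Q A ⟶ Kobj p c Q B :=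
  lift p c Q (eA p c Q A ≫ f) (eqToHom (pK p c Q A) ≫ Q.map (p.map f))
    (by
      rw [Category.assoc, Q.ε.naturality, Functor.map_comp, pe]
      simp [Functor.id_map])

lemma p_Kmap {A B : 𝔼} (f : A ⟶ B) :
    p.map (Kmap p c Q f) =
      eqToHom (pK p c Q A) ≫ Q.map (p.map f) ≫ eqToHom (pK p c Q B).symm := by
  rw [Kmap, p_lift]; simp

lemma Kmap_e {A B : 𝔼} (f : A ⟶ B) :
    Kmap p c Q f ≫ eA p c Q B = eA p c Q A ≫ f := lift_e ..

/-- The lifted endofunctor. -/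
noncomputable def Kfun : 𝔼 ⥤ 𝔼 where
  obj := Kobj p c Q
  map := Kmap p c Q
  map_id A := by
    refine PCart.uniq (c.cart A (Q.ε.app (p.obj A))) ?_ ?_
    · rw [p_Kmap]; simp
    · show Kmap p c Q (𝟙 A) ≫ eA p c Q A = 𝟙 _ ≫ eA p c Q A
      rw [Kmap_e]; simp
  map_comp f g := by
    refine PCart.uniq (c.cart _ (Q.ε.app _)) ?_ ?_
    · show p.map (Kmap p c Q (f ≫ g)) = p.map (Kmap p c Q f ≫ Kmap p c Q g)
      rw [p_Kmap, p.map_comp, p.map_comp, p_Kmap, p_Kmap]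
      simp
    · show Kmap p c Q (f ≫ g) ≫ eA p c Q _ = (Kmap p c Q f ≫ Kmap p c Q g) ≫ eA p c Q _
      rw [Kmap_e, Category.assoc, Kmap_e]
      rw [← Category.assoc (Kmap p c Q f), Kmap_e, Category.assoc]

/-- The comultiplication of the lifted comonad. -/
noncomputable def dA (A : 𝔼) : Kobj p c Q A ⟶ Kobj p c Q (Kobj p c Q A) :=
  lift p c Q (𝟙 _)
    (eqToHom (pK p c Q A) ≫ Q.δ.app (p.obj A) ≫ eqToHom (congrArg Q.obj (pK p c Q A).symm))
    (by
      rw [show eqToHom (congrArg Q.obj (pK p c Q A).symm)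
            = Q.map (eqToHom (pK p c Q A).symm) from (eqToHom_map _ _).symm,
        Category.assoc, Category.assoc, Q.ε.naturality, Functor.id_map,
        ← Category.assoc (Q.δ.app _), Q.left_counit]
      simp)

lemma p_dA (A : 𝔼) :
    p.map (dA p c Q A) =
      eqToHom (pK p c Q A) ≫ Q.δ.app (p.obj A) ≫
        eqToHom (congrArg Q.obj (pK p c Q A).symm) ≫ eqToHom (pK p c Q (Kobj p c Q A)).symm := by
  rw [dA, p_lift]; simp

lemma dA_e (A : 𝔼) : dA p c Q A ≫ eA p c Q (Kobj p c Q A) = 𝟙 _ := lift_e ..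

lemma d_nat {A B : 𝔼} (f : A ⟶ B) :
    Kmap p c Q f ≫ dA p c Q B = dA p c Q A ≫ Kmap p c Q (Kmap p c Q f) := by
  refine PCart.uniq (c.cart _ (Q.ε.app _)) ?_ ?_
  · rw [p.map_comp, p.map_comp]
    simp [p_Kmap, p_dA, eqToHom_map, Functor.comp_map, Q.δ.naturality_assoc]
  · show (Kmap p c Q f ≫ dA p c Q B) ≫ eA p c Q _ =
      (dA p c Q A ≫ Kmap p c Q (Kmap p c Q f)) ≫ eA p c Q _
    rw [Category.assoc, Category.assoc, dA_e, Kmap_e, Category.comp_id,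
      ← Category.assoc, dA_e, Category.id_comp]

lemma d_coassoc (A : 𝔼) :
    dA p c Q A ≫ Kmap p c Q (dA p c Q A) = dA p c Q A ≫ dA p c Q (Kobj p c Q A) := by
  refine PCart.uniq (c.cart _ (Q.ε.app _)) ?_ ?_
  · rw [p.map_comp, p.map_comp]
    simp [p_Kmap, p_dA, eqToHom_map, Functor.comp_map]
    rw [show eqToHom (congrArg Q.obj (pK p c Q A).symm)
          = Q.map (eqToHom (pK p c Q A).symm) from (eqToHom_map _ _).symm,
      Q.δ.naturality_assoc]
    simp [eqToHom_map, Functor.comp_map]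
  · show (dA p c Q A ≫ Kmap p c Q (dA p c Q A)) ≫ eA p c Q _ =
      (dA p c Q A ≫ dA p c Q (Kobj p c Q A)) ≫ eA p c Q _
    rw [Category.assoc, Category.assoc, Kmap_e, dA_e, Category.comp_id,
      ← Category.assoc, dA_e, Category.id_comp]

lemma d_right_counit (A : 𝔼) : dA p c Q A ≫ Kmap p c Q (eA p c Q A) = 𝟙 _ := by
  refine PCart.uniq (c.cart _ (Q.ε.app _)) ?_ ?_
  · rw [p.map_comp]
    simp [p_Kmap, p_dA, pe, eqToHom_map]
  · show (dA p c Q A ≫ Kmap p c Q (eA p c Q A)) ≫ eA p c Q A = 𝟙 _ ≫ eA p c Q A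
    rw [Category.assoc, Kmap_e, ← Category.assoc, dA_e, Category.id_comp]

/-- The lifted comonad. -/
noncomputable def Kcomonad : Comonad 𝔼 where
  toFunctor := Kfun p c Q
  ε := { app := eA p c Q, naturality := fun A B f => Kmap_e p c Q f }
  δ := { app := dA p c Q, naturality := fun A B f => d_nat p c Q f }
  coassoc := fun A => d_coassoc p c Q A
  left_counit := fun A => dA_e p c Q A
  right_counit := fun A => d_right_counit p c Q A

end Aux

theorem comonad_lift (p : 𝔼 ⥤ 𝔹) (_c : Cleavage p) (Q : Comonad 𝔹) :
    ∃ (K : Comonad 𝔼) (h : ∀ A : 𝔼, p.obj (K.obj A) = Q.obj (p.obj A)),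
      (∀ A : 𝔼, p.map (K.ε.app A) = eqToHom (h A) ≫ Q.ε.app (p.obj A)) ∧
      (∀ A : 𝔼, p.map (K.δ.app A) =
        eqToHom (h A) ≫ Q.δ.app (p.obj A) ≫
          eqToHom (((h (K.obj A)).trans (congrArg Q.obj (h A))).symm)) := by

  refine ⟨Kcomonad p _c Q, pK p _c Q, fun A => pe p _c Q A, fun A => ?_⟩
  show p.map (dA p _c Q A) = _
  rw [p_dA]
  simp
  rfl


end GrayPaper
end

section
/- Let p : E → B be a fibration, (Q, δ, ε) a comonad on B, and (K, d, e) the lifted comonad. Then the comultiplication d is counital: for every object A, e_{KA} ∘ d_A = id_{KA} = K(e_A) ∘ d_A. -/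
namespace GrayPaper

open CategoryTheory

universe v u v' u'

variable {𝔼 : Type u} [Category.{v} 𝔼] {𝔹 : Type u'} [Category.{v'} 𝔹]

variable (p : 𝔼 ⥤ 𝔹) (c : Cleavage p) (Q : Comonad 𝔹)

/-- The object part of the lifted comonad: `K A` is the domain of the chosen Cartesian lift
of `ε_{p A}`. -/
def liftObj (A : 𝔼) : 𝔼 := c.dom A (Q.ε.app (p.obj A))

lemma liftObjEq (A : 𝔼) : p.obj (liftObj p c Q A) = Q.obj (p.obj A) := c.domEq A _

/-- The counit of the lifted comonad: the chosen Cartesian lift of `ε_{p A}`. -/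
def liftCounit (A : 𝔼) : liftObj p c Q A ⟶ A := c.homOf A (Q.ε.app (p.obj A))

lemma liftCounit_over (A : 𝔼) :
    p.map (liftCounit p c Q A) = eqToHom (liftObjEq p c Q A) ≫ Q.ε.app (p.obj A) :=
  c.hom_over A _

lemma liftCounit_cart (A : 𝔼) : PCart p (liftCounit p c Q A) := c.cart A _

lemma liftMap_aux {A A' : 𝔼} (f : A ⟶ A') :
    (eqToHom (liftObjEq p c Q A) ≫ Q.map (p.map f) ≫ eqToHom (liftObjEq p c Q A').symm) ≫
        p.map (liftCounit p c Q A') = p.map (liftCounit p c Q A ≫ f) := by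
  rw [p.map_comp, liftCounit_over, liftCounit_over]
  simp

/-- The morphism part of the lifted comonad: the unique Cartesian filler over `Q (p f)`. -/
noncomputable def liftMap {A A' : 𝔼} (f : A ⟶ A') : liftObj p c Q A ⟶ liftObj p c Q A' :=
  ((c.cart A' (Q.ε.app (p.obj A')) (liftCounit p c Q A ≫ f)
      (eqToHom (liftObjEq p c Q A) ≫ Q.map (p.map f) ≫ eqToHom (liftObjEq p c Q A').symm)
      (liftMap_aux p c Q f)).exists).choose

lemma liftComul_aux (A : 𝔼) :
    (eqToHom (liftObjEq p c Q A) ≫ Q.δ.app (p.obj A) ≫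
        eqToHom (congrArg Q.obj (liftObjEq p c Q A)).symm ≫
        eqToHom (liftObjEq p c Q (liftObj p c Q A)).symm) ≫
      p.map (liftCounit p c Q (liftObj p c Q A)) = p.map (𝟙 (liftObj p c Q A)) := by
  rw [liftCounit_over, p.map_id]
  have h := Q.ε.naturality (eqToHom (liftObjEq p c Q A))
  rw [eqToHom_map] at h
  rw [show Q.ε.app (p.obj (liftObj p c Q A)) =
        eqToHom (congrArg Q.obj (liftObjEq p c Q A)) ≫
          Q.ε.app (Q.obj (p.obj A)) ≫ eqToHom (liftObjEq p c Q A).symm from by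
      rw [← Category.assoc, h]; simp]
  simp

/-- The comultiplication of the lifted comonad: the unique filler over `δ_{p A}` of the
identity of `K A` through `e_{K A}`. -/
noncomputable def liftComul (A : 𝔼) : liftObj p c Q A ⟶ liftObj p c Q (liftObj p c Q A) :=
  ((c.cart (liftObj p c Q A) (Q.ε.app (p.obj (liftObj p c Q A))) (𝟙 (liftObj p c Q A))
      (eqToHom (liftObjEq p c Q A) ≫ Q.δ.app (p.obj A) ≫
        eqToHom (congrArg Q.obj (liftObjEq p c Q A)).symm ≫
        eqToHom (liftObjEq p c Q (liftObj p c Q A)).symm)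
      (liftComul_aux p c Q A)).exists).choose


lemma liftMap_spec {A A' : 𝔼} (f : A ⟶ A') :
    p.map (liftMap p c Q f) =
      eqToHom (liftObjEq p c Q A) ≫ Q.map (p.map f) ≫ eqToHom (liftObjEq p c Q A').symm ∧
    liftMap p c Q f ≫ liftCounit p c Q A' = liftCounit p c Q A ≫ f :=
  ((c.cart A' (Q.ε.app (p.obj A')) (liftCounit p c Q A ≫ f)
      (eqToHom (liftObjEq p c Q A) ≫ Q.map (p.map f) ≫ eqToHom (liftObjEq p c Q A').symm)
      (liftMap_aux p c Q f)).exists).choose_spec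

lemma liftComul_spec (A : 𝔼) :
    p.map (liftComul p c Q A) =
      eqToHom (liftObjEq p c Q A) ≫ Q.δ.app (p.obj A) ≫
        eqToHom (congrArg Q.obj (liftObjEq p c Q A)).symm ≫
        eqToHom (liftObjEq p c Q (liftObj p c Q A)).symm ∧
    liftComul p c Q A ≫ liftCounit p c Q (liftObj p c Q A) = 𝟙 (liftObj p c Q A) :=
  ((c.cart (liftObj p c Q A) (Q.ε.app (p.obj (liftObj p c Q A))) (𝟙 (liftObj p c Q A))
      (eqToHom (liftObjEq p c Q A) ≫ Q.δ.app (p.obj A) ≫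
        eqToHom (congrArg Q.obj (liftObjEq p c Q A)).symm ≫
        eqToHom (liftObjEq p c Q (liftObj p c Q A)).symm)
      (liftComul_aux p c Q A)).exists).choose_spec

/-- the comultiplication `d` of the lifted comonad is counital:
`e_{K A} ∘ d_A = id_{K A} = K(e_A) ∘ d_A`. -/
theorem liftComul_counital (A : 𝔼) :
    liftComul p c Q A ≫ liftCounit p c Q (liftObj p c Q A) = 𝟙 (liftObj p c Q A) ∧
    liftComul p c Q A ≫ liftMap p c Q (liftCounit p c Q A) = 𝟙 (liftObj p c Q A) := by
  have h1 := (liftComul_spec p c Q A).2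
  refine ⟨h1, ?_⟩
  obtain ⟨l, -, hu⟩ := liftCounit_cart p c Q A (liftCounit p c Q A) (𝟙 _) (by simp)
  have e1 : 𝟙 (liftObj p c Q A) = l := hu _ ⟨p.map_id _, Category.id_comp _⟩
  have e2 : liftComul p c Q A ≫ liftMap p c Q (liftCounit p c Q A) = l := by
    refine hu _ ⟨?_, ?_⟩
    · rw [p.map_comp, (liftComul_spec p c Q A).1, (liftMap_spec p c Q _).1,
        liftCounit_over]
      simp [eqToHom_map]
    · rw [Category.assoc, (liftMap_spec p c Q _).2, ← Category.assoc, h1,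
        Category.id_comp]
  rw [e2, ← e1]

end GrayPaper
end

section
/- Let p : E → B be a fibration, (Q, δ, ε) a comonad on B, and (K, d, e) the lifted comonad. Then d is natural: for every morphism f : A → B in E, d_B ∘ K f = K K f ∘ d_A. Moreover d is coassociative: K(d_A) ∘ d_A = d_{K A} ∘ d_A. Hence (K, d, e) is a comonad on E. -/
namespace GrayPaper

open CategoryTheory

universe v u v' u'

variable {𝔼 : Type u} [Category.{v} 𝔼] {𝔹 : Type u'} [Category.{v'} 𝔹]

variable (p : 𝔼 ⥤ 𝔹) (c : Cleavage p) (Q : Comonad 𝔹)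

lemma eq_of_pcart {X Y Z : 𝔼} {f : X ⟶ Y} (hf : PCart p f) {g h : Z ⟶ X}
    (h1 : p.map g = p.map h) (h2 : g ≫ f = h ≫ f) : g = h := by
  obtain ⟨l, -, hu⟩ := hf (g ≫ f) (p.map g) (by rw [p.map_comp])
  rw [hu g ⟨rfl, rfl⟩, hu h ⟨h1.symm, h2.symm⟩]

lemma liftMap_over {A A' : 𝔼} (f : A ⟶ A') :
    p.map (liftMap p c Q f) =
      eqToHom (liftObjEq p c Q A) ≫ Q.map (p.map f) ≫ eqToHom (liftObjEq p c Q A').symm :=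
  ((c.cart A' (Q.ε.app (p.obj A')) (liftCounit p c Q A ≫ f)
      (eqToHom (liftObjEq p c Q A) ≫ Q.map (p.map f) ≫ eqToHom (liftObjEq p c Q A').symm)
      (liftMap_aux p c Q f)).exists).choose_spec.1

lemma liftMap_comm {A A' : 𝔼} (f : A ⟶ A') :
    liftMap p c Q f ≫ liftCounit p c Q A' = liftCounit p c Q A ≫ f :=
  ((c.cart A' (Q.ε.app (p.obj A')) (liftCounit p c Q A ≫ f)
      (eqToHom (liftObjEq p c Q A) ≫ Q.map (p.map f) ≫ eqToHom (liftObjEq p c Q A').symm)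
      (liftMap_aux p c Q f)).exists).choose_spec.2

lemma liftComul_over (A : 𝔼) :
    p.map (liftComul p c Q A) =
      eqToHom (liftObjEq p c Q A) ≫ Q.δ.app (p.obj A) ≫
        eqToHom (congrArg Q.obj (liftObjEq p c Q A)).symm ≫
        eqToHom (liftObjEq p c Q (liftObj p c Q A)).symm :=
  ((c.cart (liftObj p c Q A) (Q.ε.app (p.obj (liftObj p c Q A))) (𝟙 (liftObj p c Q A))
      (eqToHom (liftObjEq p c Q A) ≫ Q.δ.app (p.obj A) ≫
        eqToHom (congrArg Q.obj (liftObjEq p c Q A)).symm ≫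
        eqToHom (liftObjEq p c Q (liftObj p c Q A)).symm)
      (liftComul_aux p c Q A)).exists).choose_spec.1

lemma liftComul_comm (A : 𝔼) :
    liftComul p c Q A ≫ liftCounit p c Q (liftObj p c Q A) = 𝟙 (liftObj p c Q A) :=
  ((c.cart (liftObj p c Q A) (Q.ε.app (p.obj (liftObj p c Q A))) (𝟙 (liftObj p c Q A))
      (eqToHom (liftObjEq p c Q A) ≫ Q.δ.app (p.obj A) ≫
        eqToHom (congrArg Q.obj (liftObjEq p c Q A)).symm ≫
        eqToHom (liftObjEq p c Q (liftObj p c Q A)).symm)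
      (liftComul_aux p c Q A)).exists).choose_spec.2

/-- the comultiplication `d` of the lifted comonad is natural,
`K f ≫ d_B = d_A ≫ K K f`, and coassociative, `d_A ≫ K (d_A) = d_A ≫ d_{K A}`;
hence `(K, d, e)` is a comonad on `𝔼`. -/
theorem liftComul_natural_coassoc :
    (∀ {A A' : 𝔼} (f : A ⟶ A'),
      liftMap p c Q f ≫ liftComul p c Q A' =
        liftComul p c Q A ≫ liftMap p c Q (liftMap p c Q f)) ∧
    (∀ A : 𝔼,
      liftComul p c Q A ≫ liftMap p c Q (liftComul p c Q A) =
        liftComul p c Q A ≫ liftComul p c Q (liftObj p c Q A)) := by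
  constructor
  · intro A A' f
    apply eq_of_pcart p (liftCounit_cart p c Q (liftObj p c Q A'))
    · rw [p.map_comp, p.map_comp]
      simp only [liftMap_over, liftComul_over, Functor.map_comp, eqToHom_map,
        Category.assoc, eqToHom_trans_assoc, eqToHom_refl, Category.id_comp]
      have hδ := Q.δ.naturality (p.map f)
      simp only [Functor.comp_map] at hδ
      rw [← Category.assoc (Q.map (p.map f)), hδ]
      simp
    · rw [Category.assoc, liftComul_comm, Category.comp_id, Category.assoc,
        liftMap_comm, ← Category.assoc, liftComul_comm, Category.id_comp]
  · intro A
    apply eq_of_pcart p (liftCounit_cart p c Q (liftObj p c Q (liftObj p c Q A)))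
    · rw [p.map_comp, p.map_comp]
      simp only [liftMap_over, liftComul_over, Functor.map_comp, eqToHom_map,
        Category.assoc, eqToHom_trans_assoc, eqToHom_refl, Category.id_comp]
      have hδ := Q.δ.naturality (eqToHom (liftObjEq p c Q A))
      simp only [Functor.comp_map, eqToHom_map] at hδ
      have hco := Q.coassoc (p.obj A)
      rw [show Q.δ.app (p.obj (liftObj p c Q A)) =
            eqToHom (congrArg Q.obj (liftObjEq p c Q A)) ≫ Q.δ.app (Q.obj (p.obj A)) ≫
              eqToHom (congrArg (fun x => Q.obj (Q.obj x)) (liftObjEq p c Q A)).symm from by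
          rw [← Category.assoc, hδ]; simp]
      simp only [Category.assoc, eqToHom_trans_assoc, eqToHom_refl, Category.id_comp]
      rw [← Category.assoc (Q.δ.app (p.obj A)), ← Category.assoc (Q.δ.app (p.obj A)), hco]
    · rw [Category.assoc, Category.assoc, liftMap_comm, ← Category.assoc, liftComul_comm,
        Category.id_comp, liftComul_comm, Category.comp_id]

end GrayPaper
end

section
/- Let (Q, δ, ε) be a comonad on a complete category C such that each ε is epimorphic. Then the inclusion R : C → C_Q of C into the co-Kleisli category preserves all limits: if (ℓ_i : L → D_i) is a limiting cone on a diagram D in C, then its image under R is a limiting cone in C_Q. -/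
namespace GrayPaper

open CategoryTheory CategoryTheory.Limits

universe v u

theorem cokleisli_inclusion_preserves_limits {C : Type u} [Category.{v} C]
    [HasLimits C] (Q : Comonad C) (hepi : ∀ A : C, Epi (Q.ε.app A))
    {J : Type v} [Category.{v} J] (D : J ⥤ C) (t : Cone D) (ht : IsLimit t)
    (X : C) (c : ∀ j : J, Q.obj X ⟶ D.obj j)
    (hc : ∀ {j j' : J} (φ : j ⟶ j'),
      Q.δ.app X ≫ Q.map (c j) ≫ (Q.ε.app (D.obj j) ≫ D.map φ) = c j') :
    ∃! m : Q.obj X ⟶ t.pt,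
      ∀ j : J, Q.δ.app X ≫ Q.map m ≫ (Q.ε.app t.pt ≫ t.π.app j) = c j := by
  have key : ∀ {Y : C} (m : Q.obj X ⟶ Y),
      (Q.δ.app X ≫ Q.map m) ≫ Q.ε.app Y = m := by
    intro Y m
    rw [Category.assoc, Q.ε.naturality m, ← Category.assoc, Q.left_counit,
      Category.id_comp, Functor.id_map]
  have hc' : ∀ {j j' : J} (φ : j ⟶ j'), c j ≫ D.map φ = c j' := by
    intro j j' φ
    have := hc φ
    simp only [← Category.assoc] at this
    rwa [key (c j)] at this
  let s : Cone D :=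
    { pt := Q.obj X
      π := { app := c, naturality := by intro j j' φ; simp [hc' φ] } }
  refine ⟨ht.lift s, ?_, ?_⟩
  · intro j
    simp only [← Category.assoc]
    rw [key]
    exact ht.fac s j
  · intro m hm
    apply ht.hom_ext
    intro j
    rw [ht.fac s j]
    have := hm j
    simp only [← Category.assoc] at this
    rw [key m] at this
    simpa using this

end GrayPaper
end

section
/- Let H be a 2-category, H→ its category of squares, and d₀, d₁ : H→ → H₁ the source and target functors, i : H₁ → H→ the identity-square functor. The pasting composition of squares restricts along the pullback H→ ×_{d₀,d₁} H→ to give an internal category object in Cat: the object of objects is H₁, the object of morphisms is H→, with source d₀, target d₁, identities i, and composition m given by pasting; in particular m is associative and unital and satisfies d₀ ∘ m = d₀ ∘ pr₂ and d₁ ∘ m = d₁ ∘ pr₁. -/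
namespace GrayPaper

open CategoryTheory CategoryTheory.Bicategory

universe w v u w₂ v₂ u₂ w₃ v₃ u₃

/-- An object of the path space `H→` of a (strict) 2-category `H`: a 1-cell of `H`. -/
structure PathOb (H : Type u) [Bicategory.{w, v} H] where
  src : H
  tgt : H
  hom : src ⟶ tgt

variable {H : Type u} [Bicategory.{w, v} H]

/-- A morphism in the path space `H→`: a square consisting of two 1-cells and a 2-cell
filling it. -/
@[ext]
structure Square (f g : PathOb H) where
  left : f.src ⟶ g.src
  right : f.tgt ⟶ g.tgt
  fill : f.hom ≫ right ⟶ left ≫ g.hom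

variable [Bicategory.Strict H]

/-- The identity square on a 1-cell. -/
def Square.id (f : PathOb H) : Square f f where
  left := 𝟙 f.src
  right := 𝟙 f.tgt
  fill := eqToHom (by simp)

/-- Vertical composition (pasting) of squares:
`(h₂, h₀, h₁) ∘ (g₂, g₀, g₁) = ((h₂ ◦ g₀) • (h₁ ◦ g₂), h₀ ∘ g₀, h₁ ∘ g₁)`. -/
def Square.vcomp {f g h : PathOb H} (G : Square f g) (K : Square g h) : Square f h where
  left := G.left ≫ K.left
  right := G.right ≫ K.right
  fill :=
    eqToHom (by simp) ≫ (G.fill ▷ K.right) ≫ eqToHom (by simp) ≫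
      (G.left ◁ K.fill) ≫ eqToHom (by simp)


/-- Horizontal composition (pasting along a common vertical boundary) of squares, i.e. the
composition `m` of the internal category `H→ ⇉ H₁`. -/
def Square.hcomp {x y z x' y' z' : H} {a : x ⟶ y} {b : y ⟶ z} {a' : x' ⟶ y'}
    {b' : y' ⟶ z'} (G : Square ⟨x, y, a⟩ ⟨x', y', a'⟩) (K : Square ⟨y, z, b⟩ ⟨y', z', b'⟩)
    (hmid : K.left = G.right) : Square ⟨x, z, a ≫ b⟩ ⟨x', z', a' ≫ b'⟩ where
  left := G.left
  right := K.right
  fill :=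
    eqToHom (by simp) ≫ (a ◁ K.fill) ≫ eqToHom (by rw [hmid]; simp) ≫
      (G.fill ▷ b') ≫ eqToHom (by simp)

lemma wr_wr {p q r s : H} {f g : p ⟶ q} (η : f ⟶ g) (u : q ⟶ r) (v : r ⟶ s) :
    η ▷ u ▷ v = eqToHom (by simp) ≫ η ▷ (u ≫ v) ≫ eqToHom (by simp) := by
  simp [Bicategory.whiskerRight_comp, Bicategory.Strict.associator_eqToIso]

lemma wl_wl {p q r s : H} (u : p ⟶ q) (v : q ⟶ r) {f g : r ⟶ s} (η : f ⟶ g) :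
    u ◁ v ◁ η = eqToHom (by simp) ≫ (u ≫ v) ◁ η ≫ eqToHom (by simp) := by
  simp [Bicategory.comp_whiskerLeft, Bicategory.Strict.associator_eqToIso]

lemma wl_wr {p q r s : H} (u : p ⟶ q) {f g : q ⟶ r} (η : f ⟶ g) (v : r ⟶ s) :
    (u ◁ η) ▷ v = eqToHom (by simp) ≫ u ◁ η ▷ v ≫ eqToHom (by simp) := by
  simp [Bicategory.whisker_assoc, Bicategory.Strict.associator_eqToIso]

lemma Square.heq_ext {x y x' y' : H} {a b : x ⟶ y} {a' b' : x' ⟶ y'}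
    (ha : a = b) (ha' : a' = b') {l l' : x ⟶ x'} {r r' : y ⟶ y'}
    (hl : l = l') (hr : r = r')
    {fG : a ≫ r ⟶ l ≫ a'} {fK : b ≫ r' ⟶ l' ≫ b'}
    (hf : fG = eqToHom (by rw [ha, hr]) ≫ fK ≫ eqToHom (by rw [ha', hl])) :
    HEq (Square.mk (f := ⟨x, y, a⟩) (g := ⟨x', y', a'⟩) l r fG)
      (Square.mk (f := ⟨x, y, b⟩) (g := ⟨x', y', b'⟩) l' r' fK) := by
  subst ha ha' hl hr
  simp only [eqToHom_refl, Category.id_comp, Category.comp_id] at hf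
  subst hf
  rfl

/-- source `d₀`, target `d₁`, identities `i` and the horizontal pasting `m`
make `H→ ⇉ H₁` an internal category in `Cat`: `m` has the correct faces
(`d₀ ∘ m = d₀ ∘ pr₂`, `d₁ ∘ m = d₁ ∘ pr₁`), preserves identity squares, is functorial with
respect to vertical composition of squares (so that `m` is a functor on the pullback
`H→ ×_{d₀,d₁} H→`), is associative, and is unital with respect to `i`. -/
theorem path_internal_category (H : Type u) [Bicategory.{w, v} H] [Bicategory.Strict H] :
    -- faces: d₀ ∘ m = d₀ ∘ pr₂ and d₁ ∘ m = d₁ ∘ pr₁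
    (∀ {x y z x' y' z' : H} {a : x ⟶ y} {b : y ⟶ z} {a' : x' ⟶ y'} {b' : y' ⟶ z'}
      (G : Square (H := H) ⟨x, y, a⟩ ⟨x', y', a'⟩) (K : Square ⟨y, z, b⟩ ⟨y', z', b'⟩)
      (hmid : K.left = G.right),
      (G.hcomp K hmid).left = G.left ∧ (G.hcomp K hmid).right = K.right) ∧
    -- m preserves identity squares
    (∀ {x y z : H} (a : x ⟶ y) (b : y ⟶ z),
      (Square.id (H := H) ⟨x, y, a⟩).hcomp (Square.id ⟨y, z, b⟩) rfl =
        Square.id ⟨x, z, a ≫ b⟩) ∧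
    -- m is functorial for vertical composition of squares (interchange)
    (∀ {x y z x' y' z' x'' y'' z'' : H} {a : x ⟶ y} {b : y ⟶ z} {a' : x' ⟶ y'}
      {b' : y' ⟶ z'} {a'' : x'' ⟶ y''} {b'' : y'' ⟶ z''}
      (G : Square (H := H) ⟨x, y, a⟩ ⟨x', y', a'⟩) (K : Square ⟨y, z, b⟩ ⟨y', z', b'⟩)
      (G' : Square ⟨x', y', a'⟩ ⟨x'', y'', a''⟩) (K' : Square ⟨y', z', b'⟩ ⟨y'', z'', b''⟩)
      (h : K.left = G.right) (h' : K'.left = G'.right),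
      (G.hcomp K h).vcomp (G'.hcomp K' h') =
        (G.vcomp G').hcomp (K.vcomp K')
          (show K.left ≫ K'.left = G.right ≫ G'.right by rw [h, h'])) ∧
    -- m is associative
    (∀ {x y z w x' y' z' w' : H} {a : x ⟶ y} {b : y ⟶ z} {cc : z ⟶ w} {a' : x' ⟶ y'}
      {b' : y' ⟶ z'} {cc' : z' ⟶ w'}
      (G : Square (H := H) ⟨x, y, a⟩ ⟨x', y', a'⟩) (K : Square ⟨y, z, b⟩ ⟨y', z', b'⟩)
      (L : Square ⟨z, w, cc⟩ ⟨z', w', cc'⟩) (h₁ : K.left = G.right) (h₂ : L.left = K.right),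
      HEq ((G.hcomp K h₁).hcomp L h₂) (G.hcomp (K.hcomp L h₂) h₁)) ∧
    -- m is unital with respect to the identity squares coming from `i : H₁ → H→`
    (∀ {x y x' y' : H} {a : x ⟶ y} {a' : x' ⟶ y'} (G : Square (H := H) ⟨x, y, a⟩ ⟨x', y', a'⟩),
      HEq ((Square.mk G.left G.left (eqToHom (by simp)) :
              Square ⟨x, x, 𝟙 x⟩ ⟨x', x', 𝟙 x'⟩).hcomp G rfl) G ∧
      HEq (G.hcomp (Square.mk G.right G.right (eqToHom (by simp)) :
              Square ⟨y, y, 𝟙 y⟩ ⟨y', y', 𝟙 y'⟩) rfl) G) := by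
  refine ⟨fun G K hmid => ⟨rfl, rfl⟩, ?_, ?_, ?_, ?_⟩
  · intro x y z a b
    ext <;> simp [Square.hcomp, Square.id]
  · intro x y z x' y' z' x'' y'' z'' a b a' b' a'' b'' G K G' K' h h'
    obtain ⟨gl, gr, gf⟩ := G; obtain ⟨kl, kr, kf⟩ := K
    obtain ⟨gl', gr', gf'⟩ := G'; obtain ⟨kl', kr', kf'⟩ := K'
    dsimp at h h'
    subst h h'
    ext
    · rfl
    · rfl
    · simp only [Square.hcomp, Square.vcomp, heq_eq_eq, Bicategory.comp_whiskerRight,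
        Bicategory.whiskerLeft_comp, whiskerLeft_eqToHom, eqToHom_whiskerRight, wr_wr, wl_wl,
        Category.assoc, eqToHom_trans, eqToHom_trans_assoc, eqToHom_refl, Category.id_comp,
        Category.comp_id]
      simp only [whisker_exchange_assoc, whisker_exchange, wl_wr, Category.assoc, eqToHom_trans,
        eqToHom_trans_assoc, eqToHom_refl, Category.id_comp, Category.comp_id]
  · intro x y z w x' y' z' w' a b cc a' b' cc' G K L h₁ h₂
    obtain ⟨gl, gr, gf⟩ := G; obtain ⟨kl, kr, kf⟩ := K; obtain ⟨ll, lr, lf⟩ := L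
    dsimp at h₁ h₂
    subst h₁ h₂
    refine Square.heq_ext (by simp) (by simp) rfl rfl ?_
    simp [Square.hcomp, Bicategory.Strict.leftUnitor_eqToIso, Bicategory.Strict.rightUnitor_eqToIso, Bicategory.Strict.associator_eqToIso, eqToIso.hom, eqToIso.inv, whiskerLeft_eqToHom, eqToHom_whiskerRight, eqToHom_trans, eqToHom_trans_assoc, whisker_exchange_assoc]
    erw [eqToHom_trans_assoc, eqToHom_trans_assoc, eqToHom_trans_assoc, eqToHom_trans_assoc, eqToHom_trans_assoc, eqToHom_trans_assoc, eqToHom_trans, eqToHom_trans]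
  · intro x y x' y' a a' G
    obtain ⟨gl, gr, gf⟩ := G
    constructor
    · refine Square.heq_ext (by simp) (by simp) rfl rfl ?_
      simp [Square.hcomp, Bicategory.Strict.leftUnitor_eqToIso, Bicategory.Strict.rightUnitor_eqToIso, Bicategory.Strict.associator_eqToIso, eqToIso.hom, eqToIso.inv, whiskerLeft_eqToHom, eqToHom_whiskerRight, eqToHom_trans, eqToHom_trans_assoc, whisker_exchange_assoc]
    · refine Square.heq_ext (by simp) (by simp) rfl rfl ?_
      simp [Square.hcomp, Bicategory.Strict.leftUnitor_eqToIso, Bicategory.Strict.rightUnitor_eqToIso, Bicategory.Strict.associator_eqToIso, eqToIso.hom, eqToIso.inv, whiskerLeft_eqToHom, eqToHom_whiskerRight, eqToHom_trans, eqToHom_trans_assoc, whisker_exchange_assoc]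

end GrayPaper
end
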